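/- Let m ≥ 2 be an integer and ε > 0. Then there exist constants C > 0, δ₀ > 0 and R ≥ 1 such that for all ξ ∈ ℝ^n with |ξ| ≥ R (in particular large enough that log^{[m]}(⟨ξ⟩) ≥ 1) one has inf_{p ∈ ℕ, p ≥ 1} p^{p²} ⟨ξ⟩^{−p} ≤ C · exp( −δ₀ · log(⟨ξ⟩) · (log^{[m]}(⟨ξ⟩))^{1+ε} ). -/

import Mathlib

noncomputable section

open Real Set Filter MeasureTheory

/-- Japanese bracket `⟨ξ⟩ = (1 + |ξ|²)^(1/2)`. -/
def jb {n : ℕ} (ξ : EuclideanSpace ℝ (Fin n)) : ℝ := Real.sqrt (1 + ‖ξ‖ ^ 2)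

/-- Partial derivative in the `i`-th coordinate direction. -/
def pd {n : ℕ} (i : Fin n) (f : EuclideanSpace ℝ (Fin n) → ℝ) :
    EuclideanSpace ℝ (Fin n) → ℝ :=
  fun x => fderiv ℝ f x (EuclideanSpace.single i 1)

/-- Iterated partial derivative `∂^α` for a multi-index `α : Fin n → ℕ`. -/
def md {n : ℕ} (α : Fin n → ℕ) (f : EuclideanSpace ℝ (Fin n) → ℝ) :
    EuclideanSpace ℝ (Fin n) → ℝ :=
  (List.finRange n).foldr (fun i g => (pd i)^[α i] g) f

/-- Iterated logarithm: log^[1] = log, log^[m] = log ∘ log^[m-1]. -/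
def iterLog : ℕ → ℝ → ℝ
  | 0, s => s
  | m + 1, s => iterLog m (Real.log s)

/-- Example 3.5: the weight sequence K_p = p^{p²} is compatible with the weight function
η(s) = log(s) (log^[m](s))^{1+ε}. -/
def tower : ℕ → ℝ
  | 0 => 1
  | k+1 => Real.exp (tower k)

lemma one_le_tower (k : ℕ) : 1 ≤ tower k := by
  induction k with
  | zero => simp [tower]
  | succ k ih => simpa [tower] using Real.one_le_exp (by linarith)

lemma iterLog_bounds : ∀ k (u : ℝ), tower k ≤ u → 1 ≤ iterLog k u ∧ iterLog k u ≤ u := by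
  intro k
  induction k with
  | zero => intro u hu; exact ⟨by simpa [tower, iterLog] using hu, le_rfl⟩
  | succ k ih =>
    intro u hu
    have hu0 : 0 < u := lt_of_lt_of_le (Real.exp_pos _) (by simpa [tower] using hu)
    have hlog : tower k ≤ Real.log u := by
      rw [Real.le_log_iff_exp_le hu0]; simpa [tower] using hu
    obtain ⟨h1, h2⟩ := ih (Real.log u) hlog
    exact ⟨h1, le_trans h2 (Real.log_le_self hu0.le)⟩

lemma eventually_ineq (ε : ℝ) (hε : 0 < ε) :
    ∃ L₀ : ℝ, ∀ L : ℝ, L₀ ≤ L → 4 * Real.log L + Real.log L ^ (1 + ε) ≤ Real.sqrt L := by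
  have h1 := (isLittleO_log_rpow_atTop (by norm_num : (0:ℝ) < 1/2)).bound
    (by norm_num : (0:ℝ) < 1/8)
  have h2 := (isLittleO_log_rpow_rpow_atTop (1+ε) (by norm_num : (0:ℝ) < 1/2)).bound
    one_half_pos
  have h3 : ∀ᶠ L : ℝ in atTop, 4 * Real.log L + Real.log L ^ (1+ε) ≤ Real.sqrt L := by
    filter_upwards [h1, h2, eventually_ge_atTop (0:ℝ)] with L hL1 hL2 hL0
    have hnorm : ‖L ^ ((1:ℝ)/2)‖ = Real.sqrt L := by
      rw [Real.norm_eq_abs, abs_of_nonneg (Real.rpow_nonneg hL0 _), Real.sqrt_eq_rpow]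
    rw [hnorm] at hL1 hL2
    have a1 : 4 * Real.log L ≤ 4 * ‖Real.log L‖ := by
      have := le_abs_self (Real.log L); rw [Real.norm_eq_abs]; linarith
    have a2 : Real.log L ^ (1+ε) ≤ ‖Real.log L ^ (1+ε)‖ := le_abs_self _
    linarith
  obtain ⟨L₀, hL₀⟩ := eventually_atTop.mp h3
  exact ⟨L₀, hL₀⟩

theorem stmt10 {n : ℕ} (m : ℕ) (hm : 2 ≤ m) (ε : ℝ) (hε : 0 < ε) :
    ∃ C > 0, ∃ δ₀ > 0, ∃ R : ℝ, 1 ≤ R ∧ ∀ ξ : EuclideanSpace ℝ (Fin n), R ≤ ‖ξ‖ →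
      1 ≤ iterLog m (jb ξ) ∧
      (⨅ p : ℕ, (((p + 1 : ℕ) : ℝ) ^ ((p + 1) ^ 2) * (jb ξ)⁻¹ ^ (p + 1)))
        ≤ C * Real.exp (-δ₀ * (Real.log (jb ξ) * (iterLog m (jb ξ)) ^ (1 + ε))) := by
  obtain ⟨L₀, hL₀⟩ := eventually_ineq ε hε
  refine ⟨1, one_pos, 1, one_pos, max (Real.exp (max L₀ 4)) (tower m),
    le_trans (one_le_tower m) (le_max_right _ _), ?_⟩
  intro ξ hξ
  set s := jb ξ with hsdef
  have hns : ‖ξ‖ ≤ s := by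
    rw [hsdef, jb]
    have h := Real.sqrt_le_sqrt (show ‖ξ‖^2 ≤ 1 + ‖ξ‖^2 by linarith)
    rwa [Real.sqrt_sq (norm_nonneg ξ)] at h
  have hs_ge : max (Real.exp (max L₀ 4)) (tower m) ≤ s := le_trans hξ hns
  have hs0 : 0 < s := lt_of_lt_of_le (Real.exp_pos _)
    (le_trans (le_max_left _ _) hs_ge)
  set L := Real.log s with hLdef
  have hLb : max L₀ 4 ≤ L := by
    rw [hLdef, Real.le_log_iff_exp_le hs0]
    exact le_trans (le_max_left _ _) hs_ge
  have hL4 : (4:ℝ) ≤ L := le_trans (le_max_right _ _) hLb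
  have hL0' : (0:ℝ) ≤ L := by linarith
  have htm : tower m ≤ s := le_trans (le_max_right _ _) hs_ge
  obtain ⟨hM1, _⟩ := iterLog_bounds m s htm
  -- M ≤ log L
  obtain ⟨k, hk⟩ := Nat.exists_eq_add_of_le hm
  have hkm : m = k + 2 := by omega
  have hL0pos : 0 < L := by linarith
  have htk1 : tower (k+1) ≤ L := by
    rw [hLdef, Real.le_log_iff_exp_le hs0]
    have : tower (k+2) ≤ s := by rw [← hkm]; exact htm
    simpa [tower] using this
  have htk : tower k ≤ Real.log L := by
    rw [Real.le_log_iff_exp_le hL0pos]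
    simpa [tower] using htk1
  have hMeq : iterLog m s = iterLog k (Real.log L) := by
    rw [hkm, hLdef, show k+2 = (k+1)+1 from rfl, iterLog, iterLog]
  have hMle : iterLog m s ≤ Real.log L := by
    rw [hMeq]; exact (iterLog_bounds k _ htk).2
  refine ⟨hM1, ?_⟩
  -- choose p = q - 1 with q = ⌈√L⌉₊
  set q : ℕ := ⌈Real.sqrt L⌉₊ with hqdef
  have hsl2 : (2:ℝ) ≤ Real.sqrt L := by
    rw [show (2:ℝ) = Real.sqrt 4 by
      rw [show (4:ℝ) = 2^2 by norm_num, Real.sqrt_sq (by norm_num)]]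
    exact Real.sqrt_le_sqrt hL4
  have hq1 : 1 ≤ q := Nat.one_le_iff_ne_zero.mpr (by
    simp only [hqdef, ne_eq, Nat.ceil_eq_zero, not_le]
    linarith)
  have hinf : (⨅ p : ℕ, (((p + 1 : ℕ) : ℝ) ^ ((p + 1) ^ 2) * s⁻¹ ^ (p + 1)))
      ≤ ((q : ℝ) ^ (q ^ 2) * s⁻¹ ^ q) := by
    have := ciInf_le (f := fun p : ℕ => (((p + 1 : ℕ) : ℝ) ^ ((p + 1) ^ 2) * s⁻¹ ^ (p + 1)))
      ⟨0, by rintro x ⟨p, rfl⟩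
             exact mul_nonneg (by positivity) (pow_nonneg (inv_nonneg.2 hs0.le) _)⟩ (q - 1)
    rwa [Nat.sub_add_cancel hq1] at this
  refine le_trans hinf ?_
  have hqpos : (0:ℝ) < (q:ℝ) := by exact_mod_cast hq1
  have hql : Real.sqrt L ≤ (q:ℝ) := Nat.le_ceil _
  have hqu : (q:ℝ) ≤ 2 * Real.sqrt L := by
    have := Nat.ceil_lt_add_one (Real.sqrt_nonneg L)
    have : (q:ℝ) < Real.sqrt L + 1 := by exact_mod_cast this
    linarith
  have hsq : Real.sqrt L * Real.sqrt L = L := Real.mul_self_sqrt hL0'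
  have hq2le : (q:ℝ)^2 ≤ 4 * L := by nlinarith
  have hqleL : (q:ℝ) ≤ L := by nlinarith
  have hlogq : Real.log (q:ℝ) ≤ Real.log L := Real.log_le_log hqpos hqleL
  have hlogq0 : 0 ≤ Real.log (q:ℝ) := Real.log_nonneg (by exact_mod_cast hq1)
  have hmain : (q:ℝ)^2 * Real.log (q:ℝ) ≤ 4 * L * Real.log L := by
    have hlogL0 : 0 ≤ Real.log L := le_trans hlogq0 hlogq
    exact mul_le_mul hq2le hlogq hlogq0 (by linarith)
  have hrpow : iterLog m s ^ (1+ε) ≤ Real.log L ^ (1+ε) :=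
    Real.rpow_le_rpow (by linarith) hMle (by linarith)
  have hkey : 4 * Real.log L + Real.log L ^ (1+ε) ≤ Real.sqrt L :=
    hL₀ L (le_trans (le_max_left _ _) hLb)
  -- final exponent inequality
  have hexp : (q:ℝ)^2 * Real.log (q:ℝ) + L * (iterLog m s) ^ (1+ε) ≤ (q:ℝ) * L := by
    have h4 : L * (iterLog m s) ^ (1+ε) ≤ L * Real.log L ^ (1+ε) :=
      mul_le_mul_of_nonneg_left hrpow hL0'
    have h5 : L * (4 * Real.log L + Real.log L ^ (1+ε)) ≤ L * Real.sqrt L :=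
      mul_le_mul_of_nonneg_left hkey hL0'
    have h6 : L * Real.sqrt L ≤ (q:ℝ) * L := by
      rw [mul_comm]
      exact mul_le_mul_of_nonneg_right hql hL0'
    calc (q:ℝ)^2 * Real.log (q:ℝ) + L * iterLog m s ^ (1+ε)
        ≤ 4*L*Real.log L + L * Real.log L ^ (1+ε) := add_le_add hmain h4
      _ = L * (4*Real.log L + Real.log L ^ (1+ε)) := by ring
      _ ≤ L * Real.sqrt L := h5
      _ ≤ (q:ℝ) * L := h6
  -- convert to exponentials
  have e1 : (q:ℝ) ^ (q^2) * s⁻¹ ^ q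
      = Real.exp ((q:ℝ)^2 * Real.log (q:ℝ) - (q:ℝ) * L) := by
    have l1 : (q:ℝ) ^ (q^2) = Real.exp ((q:ℝ)^2 * Real.log (q:ℝ)) := by
      rw [← Real.exp_log (pow_pos hqpos (q^2)), Real.log_pow]
      push_cast
      ring_nf
    have l2 : s⁻¹ ^ q = Real.exp (-((q:ℝ) * L)) := by
      rw [show s⁻¹ = Real.exp (-L) by
        rw [Real.exp_neg, hLdef, Real.exp_log hs0]]
      rw [← Real.exp_nat_mul]
      ring_nf
    rw [l1, l2, ← Real.exp_add]
    ring_nf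
  rw [e1, one_mul]
  rw [Real.exp_le_exp]
  have : -(1:ℝ) * (L * iterLog m s ^ (1+ε)) = -(L * iterLog m s ^ (1+ε)) := by ring
  rw [this]
  linarith
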